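/- arXiv:2310.06806 — 2 statements merged into one kernel-verified Lean document; each statement's English description precedes it below -/
import Mathlib

section
/- For any real number s > 0, there exists a constant C_s > 0 such that for every sequence (a_k) of nonnegative reals, one has ∑_{j ∈ ℤ} 2^{2sj} (∑_{k ≥ j} a_k)^2 ≤ C_s ∑_{k ∈ ℤ} 2^{2sk} a_k^2. -/
open ENNReal NNReal

lemma amgm (x y : ℝ≥0∞) : 2 * (x * y) ≤ x ^ 2 + y ^ 2 := by
  rcases eq_or_ne x 0 with rfl | hx0
  · simp
  rcases eq_or_ne y 0 with rfl | hy0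
  · simp
  rcases eq_or_ne x ⊤ with rfl | hxt
  · have h : (⊤ : ℝ≥0∞) ^ 2 = ⊤ := by simp
    rw [h]; simp
  rcases eq_or_ne y ⊤ with rfl | hyt
  · have h : (⊤ : ℝ≥0∞) ^ 2 = ⊤ := by simp
    rw [h]; simp
  lift x to ℝ≥0 using hxt
  lift y to ℝ≥0 using hyt
  have h : (2 * (x * y) : ℝ≥0) ≤ x ^ 2 + y ^ 2 := by
    have := two_mul_le_add_sq (x : ℝ) (y : ℝ)
    rw [mul_assoc] at this
    exact_mod_cast this
  exact_mod_cast h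

lemma tsum_halfline_ge (f : ℤ → ℝ≥0∞) (j : ℤ) :
    ∑' l : ℤ, (if j ≤ l then f l else 0) = ∑' m : ℕ, f (j + m) := by
  have hg : Function.Injective (fun m : ℕ => j + (m : ℤ)) := by
    intro m n h; simpa using h
  rw [← Function.Injective.tsum_eq hg (f := fun l : ℤ => if j ≤ l then f l else 0)]
  · exact tsum_congr fun m => by rw [if_pos (by omega)]
  · intro x hx
    have h1 : j ≤ x := by by_contra h; exact hx (if_neg h)
    exact ⟨(x - j).toNat, show j + ((x - j).toNat : ℤ) = x by omega⟩

lemma tsum_halfline_le (f : ℤ → ℝ≥0∞) (k : ℤ) :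
    ∑' j : ℤ, (if j ≤ k then f j else 0) = ∑' m : ℕ, f (k - m) := by
  have hg : Function.Injective (fun m : ℕ => k - (m : ℤ)) := by
    intro m n h; simp only at h; omega
  rw [← Function.Injective.tsum_eq hg (f := fun j : ℤ => if j ≤ k then f j else 0)]
  · exact tsum_congr fun m => by rw [if_pos (by omega)]
  · intro x hx
    have h1 : x ≤ k := by by_contra h; exact hx (if_neg h)
    exact ⟨(k - x).toNat, show k - ((k - x).toNat : ℤ) = x by omega⟩

noncomputable def Ageo (c : ℝ) : ℝ≥0∞ := (1 - (2:ℝ≥0∞) ^ (-c))⁻¹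

lemma two_rpow_ne_zero (x : ℝ) : (2:ℝ≥0∞) ^ x ≠ 0 := by
  simp [ENNReal.rpow_eq_zero_iff]

lemma two_rpow_ne_top (x : ℝ) : (2:ℝ≥0∞) ^ x ≠ ⊤ := by
  simp [ENNReal.rpow_eq_top_iff]

lemma two_rpow_mul (x y : ℝ) : (2:ℝ≥0∞) ^ x * (2:ℝ≥0∞) ^ y = (2:ℝ≥0∞) ^ (x + y) :=
  (ENNReal.rpow_add x y (by norm_num) (by norm_num)).symm

lemma Ageo_ne_top {c : ℝ} (hc : 0 < c) : Ageo c ≠ ⊤ := by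
  rw [Ageo, Ne, ENNReal.inv_eq_top]
  have h1 : (2:ℝ≥0∞) ^ (-c) < 1 := by
    exact ENNReal.rpow_lt_one_of_one_lt_of_neg (by norm_num) (by linarith)
  exact (tsub_pos_of_lt h1).ne'

lemma Ageo_ne_zero (c : ℝ) : Ageo c ≠ 0 := by
  rw [Ageo, Ne, ENNReal.inv_eq_zero]
  exact (lt_of_le_of_lt tsub_le_self one_lt_top).ne

lemma geo_sum (c : ℝ) (x : ℝ) :
    ∑' m : ℕ, (2:ℝ≥0∞) ^ (x + (-c) * (m : ℝ)) = (2:ℝ≥0∞) ^ x * Ageo c := by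
  have h : ∀ m : ℕ, (2:ℝ≥0∞) ^ (x + (-c) * (m : ℝ)) = (2:ℝ≥0∞) ^ x * ((2:ℝ≥0∞) ^ (-c)) ^ m := by
    intro m
    rw [ENNReal.rpow_add _ _ (by norm_num) (by norm_num), ENNReal.rpow_mul,
      ENNReal.rpow_natCast]
  rw [tsum_congr h, ENNReal.tsum_mul_left, ENNReal.tsum_geometric, Ageo]

lemma geo1 (c : ℝ) (j : ℤ) :
    ∑' l : ℤ, (if j ≤ l then (2:ℝ≥0∞) ^ (-(c * (l : ℝ))) else 0)
      = (2:ℝ≥0∞) ^ (-(c * (j : ℝ))) * Ageo c := by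
  rw [tsum_halfline_ge (fun l : ℤ => (2:ℝ≥0∞) ^ (-(c * (l : ℝ)))) j, ← geo_sum c (-(c * (j:ℝ)))]
  exact tsum_congr fun m => by congr 1; push_cast; ring

lemma geo2 (c : ℝ) (k : ℤ) :
    ∑' j : ℤ, (if j ≤ k then (2:ℝ≥0∞) ^ (c * (j : ℝ)) else 0)
      = (2:ℝ≥0∞) ^ (c * (k : ℝ)) * Ageo c := by
  rw [tsum_halfline_le (fun j : ℤ => (2:ℝ≥0∞) ^ (c * (j : ℝ))) k, ← geo_sum c (c * (k:ℝ))]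
  exact tsum_congr fun m => by congr 1; push_cast; ring

noncomputable def P1 (s : ℝ) (b : ℤ → ℝ≥0∞) (j k l : ℤ) : ℝ≥0∞ :=
  (if j ≤ k then (2:ℝ≥0∞) ^ (s*(j:ℝ) + s*(k:ℝ)) * b k ^ 2 else 0) *
  (if j ≤ l then (2:ℝ≥0∞) ^ (s*(j:ℝ) - s*(l:ℝ)) else 0)

lemma hpt (s : ℝ) (b : ℤ → ℝ≥0∞) (j k l : ℤ) :
    2 * ((2:ℝ≥0∞) ^ (2*s*(j:ℝ)) * ((if j ≤ k then b k else 0) * (if j ≤ l then b l else 0)))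
      ≤ P1 s b j k l + P1 s b j l k := by
  by_cases hk : j ≤ k
  · by_cases hl : j ≤ l
    · simp only [P1, if_pos hk, if_pos hl]
      set u := (2:ℝ≥0∞) ^ ((s*(k:ℝ) - s*(l:ℝ))/2) * b k with hu
      set v := (2:ℝ≥0∞) ^ ((s*(l:ℝ) - s*(k:ℝ))/2) * b l with hv
      have huv : u * v = b k * b l := by
        rw [hu, hv, mul_mul_mul_comm, two_rpow_mul,
          show (s*(k:ℝ)-s*(l:ℝ))/2 + (s*(l:ℝ)-s*(k:ℝ))/2 = 0 by ring,
          ENNReal.rpow_zero, one_mul]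
      have hsq : ∀ e : ℝ, ∀ z : ℝ≥0∞, ((2:ℝ≥0∞) ^ (e/2) * z) ^ 2 = (2:ℝ≥0∞) ^ e * z ^ 2 := by
        intro e z
        rw [mul_pow, ← ENNReal.rpow_natCast ((2:ℝ≥0∞) ^ (e/2)) 2, ← ENNReal.rpow_mul,
          show e/2 * ((2:ℕ):ℝ) = e by push_cast; ring]
      have key2 : ∀ (w ek el : ℝ) (z : ℝ≥0∞),
          (2:ℝ≥0∞) ^ w * ((2:ℝ≥0∞) ^ (ek - el) * z) =
            (2:ℝ≥0∞) ^ (w/2 + ek) * z * (2:ℝ≥0∞) ^ (w/2 - el) := by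
        intro w ek el z
        calc (2:ℝ≥0∞) ^ w * ((2:ℝ≥0∞) ^ (ek - el) * z)
            = ((2:ℝ≥0∞) ^ w * (2:ℝ≥0∞) ^ (ek - el)) * z := (mul_assoc _ _ _).symm
          _ = (2:ℝ≥0∞) ^ (w + (ek - el)) * z := by rw [two_rpow_mul]
          _ = (2:ℝ≥0∞) ^ ((w/2 + ek) + (w/2 - el)) * z := by
              rw [show w + (ek - el) = (w/2 + ek) + (w/2 - el) by ring]
          _ = ((2:ℝ≥0∞) ^ (w/2 + ek) * (2:ℝ≥0∞) ^ (w/2 - el)) * z := by rw [two_rpow_mul]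
          _ = (2:ℝ≥0∞) ^ (w/2 + ek) * z * (2:ℝ≥0∞) ^ (w/2 - el) := by ring
      calc 2 * ((2:ℝ≥0∞) ^ (2*s*(j:ℝ)) * (b k * b l))
          = (2:ℝ≥0∞) ^ (2*s*(j:ℝ)) * (2 * (u * v)) := by rw [huv]; ring
        _ ≤ (2:ℝ≥0∞) ^ (2*s*(j:ℝ)) * (u ^ 2 + v ^ 2) := mul_le_mul_right (amgm u v) _
        _ = (2:ℝ≥0∞) ^ (2*s*(j:ℝ)) * ((2:ℝ≥0∞) ^ (s*(k:ℝ) - s*(l:ℝ)) * b k ^ 2)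
            + (2:ℝ≥0∞) ^ (2*s*(j:ℝ)) * ((2:ℝ≥0∞) ^ (s*(l:ℝ) - s*(k:ℝ)) * b l ^ 2) := by
              rw [hu, hv, hsq, hsq, mul_add]
        _ = (2:ℝ≥0∞) ^ (s*(j:ℝ) + s*(k:ℝ)) * b k ^ 2 * (2:ℝ≥0∞) ^ (s*(j:ℝ) - s*(l:ℝ))
            + (2:ℝ≥0∞) ^ (s*(j:ℝ) + s*(l:ℝ)) * b l ^ 2 * (2:ℝ≥0∞) ^ (s*(j:ℝ) - s*(k:ℝ)) := by
              rw [key2 (2*s*(j:ℝ)) (s*(k:ℝ)) (s*(l:ℝ)), key2 (2*s*(j:ℝ)) (s*(l:ℝ)) (s*(k:ℝ)),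
                show 2*s*(j:ℝ)/2 = s*(j:ℝ) by ring]
    · simp [P1, if_neg hl]
  · simp [P1, if_neg hk]

lemma key (s : ℝ) (hs : 0 < s) (b : ℤ → ℝ≥0∞) :
    ∑' j : ℤ, (2:ℝ≥0∞) ^ (2*s*(j:ℝ)) * (∑' k : ℤ, if j ≤ k then b k else 0) ^ 2
      ≤ Ageo s ^ 2 * ∑' k : ℤ, (2:ℝ≥0∞) ^ (2*s*(k:ℝ)) * b k ^ 2 := by
  have expand : ∀ j : ℤ, (2:ℝ≥0∞) ^ (2*s*(j:ℝ)) * (∑' k : ℤ, if j ≤ k then b k else 0) ^ 2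
      = ∑' k : ℤ, ∑' l : ℤ,
          (2:ℝ≥0∞) ^ (2*s*(j:ℝ)) * ((if j ≤ k then b k else 0) * (if j ≤ l then b l else 0)) := by
    intro j
    rw [sq]
    rw [show (∑' k : ℤ, if j ≤ k then b k else 0) * (∑' l : ℤ, if j ≤ l then b l else 0)
        = ∑' k : ℤ, ∑' l : ℤ, (if j ≤ k then b k else 0) * (if j ≤ l then b l else 0) by
      rw [← ENNReal.tsum_mul_right]
      exact tsum_congr fun k => ENNReal.tsum_mul_left.symm]
    rw [← ENNReal.tsum_mul_left]
    exact tsum_congr fun k => ENNReal.tsum_mul_left.symm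
  have hl : ∀ j k : ℤ, ∑' l : ℤ, P1 s b j k l
      = (if j ≤ k then (2:ℝ≥0∞) ^ (s*(j:ℝ)+s*(k:ℝ)) * b k ^ 2 else 0) * Ageo s := by
    intro j k
    simp only [P1]
    rw [ENNReal.tsum_mul_left]
    congr 1
    have h : ∀ l : ℤ, (if j ≤ l then (2:ℝ≥0∞) ^ (s*(j:ℝ) - s*(l:ℝ)) else 0)
        = (2:ℝ≥0∞) ^ (s*(j:ℝ)) * (if j ≤ l then (2:ℝ≥0∞) ^ (-(s*(l:ℝ))) else 0) := by
      intro l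
      split_ifs with h
      · rw [two_rpow_mul, show s*(j:ℝ) + -(s*(l:ℝ)) = s*(j:ℝ) - s*(l:ℝ) by ring]
      · rw [mul_zero]
    rw [tsum_congr h, ENNReal.tsum_mul_left, geo1 s j, ← mul_assoc, two_rpow_mul,
      show s*(j:ℝ) + -(s*(j:ℝ)) = 0 by ring, ENNReal.rpow_zero, one_mul]
  have sumP1 : ∑' j : ℤ, ∑' k : ℤ, ∑' l : ℤ, P1 s b j k l
      = Ageo s ^ 2 * ∑' k : ℤ, (2:ℝ≥0∞) ^ (2*s*(k:ℝ)) * b k ^ 2 := by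
    calc ∑' j : ℤ, ∑' k : ℤ, ∑' l : ℤ, P1 s b j k l
        = ∑' j : ℤ, ∑' k : ℤ,
            (if j ≤ k then (2:ℝ≥0∞) ^ (s*(j:ℝ)+s*(k:ℝ)) * b k ^ 2 else 0) * Ageo s :=
          tsum_congr fun j => tsum_congr fun k => hl j k
      _ = ∑' k : ℤ, ∑' j : ℤ,
            (if j ≤ k then (2:ℝ≥0∞) ^ (s*(j:ℝ)+s*(k:ℝ)) * b k ^ 2 else 0) * Ageo s :=
          ENNReal.tsum_comm
      _ = ∑' k : ℤ, ((2:ℝ≥0∞) ^ (s*(k:ℝ)) * Ageo s) * ((2:ℝ≥0∞) ^ (s*(k:ℝ)) * b k ^ 2) * Ageo s := by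
          refine tsum_congr fun k => ?_
          rw [ENNReal.tsum_mul_right]
          congr 1
          have h : ∀ j : ℤ, (if j ≤ k then (2:ℝ≥0∞) ^ (s*(j:ℝ)+s*(k:ℝ)) * b k ^ 2 else 0)
              = (if j ≤ k then (2:ℝ≥0∞) ^ (s*(j:ℝ)) else 0) * ((2:ℝ≥0∞) ^ (s*(k:ℝ)) * b k ^ 2) := by
            intro j; split_ifs with h
            · rw [← mul_assoc, two_rpow_mul]
            · rw [zero_mul]
          rw [tsum_congr h, ENNReal.tsum_mul_right, geo2 s k]
      _ = Ageo s ^ 2 * ∑' k : ℤ, (2:ℝ≥0∞) ^ (2*s*(k:ℝ)) * b k ^ 2 := by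
          rw [← ENNReal.tsum_mul_left]
          refine tsum_congr fun k => ?_
          rw [show ((2:ℝ≥0∞) ^ (s*(k:ℝ)) * Ageo s) * ((2:ℝ≥0∞) ^ (s*(k:ℝ)) * b k ^ 2) * Ageo s
              = (Ageo s * Ageo s) * (((2:ℝ≥0∞) ^ (s*(k:ℝ)) * (2:ℝ≥0∞) ^ (s*(k:ℝ))) * b k ^ 2) by
                ring,
            two_rpow_mul, show s*(k:ℝ) + s*(k:ℝ) = 2*s*(k:ℝ) by ring]
          ring
  have swap : ∑' j : ℤ, ∑' k : ℤ, ∑' l : ℤ, P1 s b j l k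
      = ∑' j : ℤ, ∑' k : ℤ, ∑' l : ℤ, P1 s b j k l :=
    tsum_congr fun j => ENNReal.tsum_comm
  have step : 2 * ∑' j : ℤ, (2:ℝ≥0∞) ^ (2*s*(j:ℝ)) * (∑' k : ℤ, if j ≤ k then b k else 0) ^ 2
      ≤ 2 * (Ageo s ^ 2 * ∑' k : ℤ, (2:ℝ≥0∞) ^ (2*s*(k:ℝ)) * b k ^ 2) := by
    rw [tsum_congr expand]
    calc 2 * ∑' j : ℤ, ∑' k : ℤ, ∑' l : ℤ,
            (2:ℝ≥0∞) ^ (2*s*(j:ℝ)) * ((if j ≤ k then b k else 0) * (if j ≤ l then b l else 0))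
        = ∑' j : ℤ, ∑' k : ℤ, ∑' l : ℤ, 2 * ((2:ℝ≥0∞) ^ (2*s*(j:ℝ)) *
            ((if j ≤ k then b k else 0) * (if j ≤ l then b l else 0))) := by
          rw [← ENNReal.tsum_mul_left]
          refine tsum_congr fun j => ?_
          rw [← ENNReal.tsum_mul_left]
          exact tsum_congr fun k => ENNReal.tsum_mul_left.symm
      _ ≤ ∑' j : ℤ, ∑' k : ℤ, ∑' l : ℤ, (P1 s b j k l + P1 s b j l k) :=
          ENNReal.tsum_le_tsum fun j => ENNReal.tsum_le_tsum fun k =>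
            ENNReal.tsum_le_tsum fun l => hpt s b j k l
      _ = ∑' j : ℤ, ∑' k : ℤ, ∑' l : ℤ, P1 s b j k l
          + ∑' j : ℤ, ∑' k : ℤ, ∑' l : ℤ, P1 s b j l k := by
          simp only [ENNReal.tsum_add]
      _ = 2 * ∑' j : ℤ, ∑' k : ℤ, ∑' l : ℤ, P1 s b j k l := by rw [swap, two_mul]
      _ = 2 * (Ageo s ^ 2 * ∑' k : ℤ, (2:ℝ≥0∞) ^ (2*s*(k:ℝ)) * b k ^ 2) := by rw [sumP1]
  exact (ENNReal.mul_le_mul_iff_right (by norm_num) (by norm_num)).mp step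

lemma inner_top_all (b : ℤ → ℝ≥0∞) (hb : ∀ k, b k ≠ ⊤) {j0 : ℤ}
    (h : ∑' k : ℤ, (if j0 ≤ k then b k else 0) = ⊤) (j : ℤ) :
    ∑' k : ℤ, (if j ≤ k then b k else 0) = ⊤ := by
  rcases le_or_gt j j0 with hle | hlt
  · refine top_le_iff.mp ?_
    rw [← h]
    refine ENNReal.tsum_le_tsum fun k => ?_
    split_ifs with h1 h2 <;> first | exact le_rfl | exact zero_le | omega
  · have split : ∀ k : ℤ, (if j0 ≤ k then b k else 0)
        = (if j0 ≤ k ∧ k < j then b k else 0) + (if j ≤ k then b k else 0) := by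
      intro k
      by_cases h1 : j0 ≤ k
      · by_cases h2 : k < j
        · rw [if_pos h1, if_pos ⟨h1, h2⟩, if_neg (by omega), add_zero]
        · rw [if_pos h1, if_neg (fun hc => h2 hc.2), if_pos (by omega), zero_add]
      · rw [if_neg h1, if_neg (fun hc => h1 hc.1), if_neg (by omega), add_zero]
    rw [tsum_congr split, ENNReal.tsum_add] at h
    have hfin : ∑' k : ℤ, (if j0 ≤ k ∧ k < j then b k else 0) ≠ ⊤ := by
      rw [tsum_eq_sum (s := Finset.Ico j0 j)
        (fun k hk => if_neg (fun hc => hk (Finset.mem_Ico.mpr ⟨hc.1, hc.2⟩)))]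
      refine (ENNReal.sum_lt_top.mpr fun k _ => ?_).ne
      split_ifs with h1
      · exact (hb k).lt_top
      · simp
    by_contra hne
    exact (ENNReal.add_ne_top.mpr ⟨hfin, hne⟩) h

/-- For any real `s > 0` there is `C_s > 0` such that for every nonnegative sequence
`(a_k)_{k ∈ ℤ}`,
`∑_{j ∈ ℤ} 2^{2sj} (∑_{k ≥ j} a_k)² ≤ C_s ∑_{k ∈ ℤ} 2^{2sk} a_k²`. -/
theorem stmt1 (s : ℝ) (hs : 0 < s) :
    ∃ C : ℝ, 0 < C ∧ ∀ a : ℤ → ℝ, (∀ k, 0 ≤ a k) →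
      ∑' j : ℤ, (2 : ℝ) ^ (2 * s * (j : ℝ)) *
        (∑' k : ℤ, if j ≤ k then a k else 0) ^ 2
      ≤ C * ∑' k : ℤ, (2 : ℝ) ^ (2 * s * (k : ℝ)) * (a k) ^ 2 := by
  refine ⟨(Ageo s ^ 2).toReal, ?_, ?_⟩
  · exact ENNReal.toReal_pos (pow_ne_zero 2 (Ageo_ne_zero s))
      (ENNReal.pow_ne_top (Ageo_ne_top hs))
  intro a ha
  set b : ℤ → ℝ≥0∞ := fun k => ENNReal.ofReal (a k) with hb
  have hbne : ∀ k, b k ≠ ⊤ := fun k => ENNReal.ofReal_ne_top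
  have hWx : ∀ x : ℝ, ((2:ℝ≥0∞) ^ x).toReal = (2:ℝ) ^ x := fun x => by
    rw [← ENNReal.toReal_rpow]; norm_num
  have hinner : ∀ j : ℤ, (∑' k : ℤ, if j ≤ k then a k else 0)
      = (∑' k : ℤ, if j ≤ k then b k else 0).toReal := by
    intro j
    have hne : ∀ k : ℤ, (if j ≤ k then b k else 0) ≠ ⊤ := by
      intro k; split_ifs with h
      · exact hbne k
      · exact ENNReal.zero_ne_top
    rw [ENNReal.tsum_toReal_eq hne]
    refine tsum_congr fun k => ?_
    split_ifs with h
    · exact (ENNReal.toReal_ofReal (ha k)).symm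
    · simp
  have hRHS : (∑' k : ℤ, (2:ℝ) ^ (2 * s * (k:ℝ)) * a k ^ 2)
      = (∑' k : ℤ, (2:ℝ≥0∞) ^ (2 * s * (k:ℝ)) * b k ^ 2).toReal := by
    rw [ENNReal.tsum_toReal_eq
      (fun k => ENNReal.mul_ne_top (two_rpow_ne_top _) (ENNReal.pow_ne_top (hbne k)))]
    refine tsum_congr fun k => ?_
    rw [ENNReal.toReal_mul, ENNReal.toReal_pow, hWx, hb]
    simp only []
    rw [ENNReal.toReal_ofReal (ha k)]
  by_cases htop : ∃ j0 : ℤ, (∑' k : ℤ, if j0 ≤ k then b k else 0) = ⊤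
  · obtain ⟨j0, hj0⟩ := htop
    have h0 : ∀ j : ℤ, (∑' k : ℤ, if j ≤ k then a k else 0) = 0 := fun j => by
      rw [hinner j, inner_top_all b hbne hj0 j]; simp
    have hz : (∑' j : ℤ, (2:ℝ) ^ (2 * s * (j:ℝ)) * (∑' k : ℤ, if j ≤ k then a k else 0) ^ 2) = 0 := by
      rw [tsum_congr (fun j => by rw [h0 j]; ring : ∀ j : ℤ,
        (2:ℝ) ^ (2 * s * (j:ℝ)) * (∑' k : ℤ, if j ≤ k then a k else 0) ^ 2 = 0)]
      exact tsum_zero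
    rw [hz]
    refine mul_nonneg ENNReal.toReal_nonneg (tsum_nonneg fun k => ?_)
    positivity
  · push_neg at htop
    have hterm_ne : ∀ j : ℤ,
        (2:ℝ≥0∞) ^ (2 * s * (j:ℝ)) * (∑' k : ℤ, if j ≤ k then b k else 0) ^ 2 ≠ ⊤ :=
      fun j => ENNReal.mul_ne_top (two_rpow_ne_top _) (ENNReal.pow_ne_top (htop j))
    have hLHS : (∑' j : ℤ, (2:ℝ) ^ (2 * s * (j:ℝ)) * (∑' k : ℤ, if j ≤ k then a k else 0) ^ 2)
        = (∑' j : ℤ, (2:ℝ≥0∞) ^ (2 * s * (j:ℝ)) *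
            (∑' k : ℤ, if j ≤ k then b k else 0) ^ 2).toReal := by
      rw [ENNReal.tsum_toReal_eq hterm_ne]
      refine tsum_congr fun j => ?_
      rw [ENNReal.toReal_mul, ENNReal.toReal_pow, hWx, hinner j]
    rw [hLHS, hRHS]
    rcases eq_or_ne (∑' k : ℤ, (2:ℝ≥0∞) ^ (2 * s * (k:ℝ)) * b k ^ 2) ⊤ with hRE | hRE
    · have hrev : (∑' k : ℤ, (2:ℝ≥0∞) ^ (2 * s * (k:ℝ)) * b k ^ 2)
          ≤ ∑' j : ℤ, (2:ℝ≥0∞) ^ (2 * s * (j:ℝ)) *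
              (∑' k : ℤ, if j ≤ k then b k else 0) ^ 2 := by
        refine ENNReal.tsum_le_tsum fun k => ?_
        refine mul_le_mul_right (pow_le_pow_left' ?_ 2) _
        have h := ENNReal.le_tsum (f := fun k' : ℤ => if k ≤ k' then b k' else 0) k
        simpa using h
      have hLt : (∑' j : ℤ, (2:ℝ≥0∞) ^ (2 * s * (j:ℝ)) *
          (∑' k : ℤ, if j ≤ k then b k else 0) ^ 2) = ⊤ := top_le_iff.mp (hRE ▸ hrev)
      rw [hLt, hRE]
      simp
    · have hfin : Ageo s ^ 2 * (∑' k : ℤ, (2:ℝ≥0∞) ^ (2 * s * (k:ℝ)) * b k ^ 2) ≠ ⊤ :=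
        ENNReal.mul_ne_top (ENNReal.pow_ne_top (Ageo_ne_top hs)) hRE
      calc (∑' j : ℤ, (2:ℝ≥0∞) ^ (2 * s * (j:ℝ)) *
              (∑' k : ℤ, if j ≤ k then b k else 0) ^ 2).toReal
          ≤ (Ageo s ^ 2 * (∑' k : ℤ, (2:ℝ≥0∞) ^ (2 * s * (k:ℝ)) * b k ^ 2)).toReal :=
            ENNReal.toReal_mono hfin (key s hs b)
        _ = (Ageo s ^ 2).toReal *
              (∑' k : ℤ, (2:ℝ≥0∞) ^ (2 * s * (k:ℝ)) * b k ^ 2).toReal := ENNReal.toReal_mul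
end

section
/- Let V be a normed space and f ∈ C^k functions from ℝ^n to V whose derivatives up to order k are bounded. Then for any integer 0 < j < k, there is a constant C depending only on j, k, n such that sup‖D^j f‖ ≤ C (sup‖D^k f‖)^{j/k} · (sup‖f‖)^{1−j/k}. -/
open Set Finset Filter

section helpers

variable {E : Type*} [NormedAddCommGroup E] [NormedSpace ℝ E]
variable {V : Type*} [NormedAddCommGroup V] [NormedSpace ℝ V]

lemma iFD_shift {k : ℕ} {f : E → V} (hf : ContDiff ℝ (k : ℕ∞) f) {i : ℕ} (hik : i ≤ k) (x : E) :
    ∀ p, iteratedFDeriv ℝ i (fun y => f (x + y)) p = iteratedFDeriv ℝ i f (x + p) := by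
  induction i with
  | zero =>
      intro p; ext m; simp
  | succ i IH =>
      intro p
      have hik' : i ≤ k := Nat.le_of_succ_le hik
      have hd : Differentiable ℝ (iteratedFDeriv ℝ i f) :=
        hf.differentiable_iteratedFDeriv (by exact_mod_cast hik)
      have h1 : iteratedFDeriv ℝ i (fun y => f (x + y)) = fun p => iteratedFDeriv ℝ i f (x + p) :=
        funext (IH hik')
      rw [iteratedFDeriv_succ_eq_comp_left, iteratedFDeriv_succ_eq_comp_left]
      simp only [Function.comp_apply]
      congr 1
      rw [h1]
      have h2 : HasFDerivAt (fun p => iteratedFDeriv ℝ i f (x + p))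
          (fderiv ℝ (iteratedFDeriv ℝ i f) (x + p)) p := by
        have := ((hd (x + p)).hasFDerivAt).comp p
          (((hasFDerivAt_id p).const_add x))
        rw [ContinuousLinearMap.comp_id] at this
        exact this
      rw [h2.fderiv]

lemma iDW_eq {k : ℕ} {g : ℝ → V} (hg : ContDiff ℝ (k : ℕ∞) g) {i : ℕ} (hik : i ≤ k)
    {s : Set ℝ} (hs : UniqueDiffOn ℝ s) {y : ℝ} (hy : y ∈ s) :
    iteratedDerivWithin i g s y = iteratedDeriv i g y := by
  have h := (contDiff_iff_ftaylorSeries.1 hg).hasFTaylorSeriesUpToOn s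
  have := h.eq_iteratedFDerivWithin_of_uniqueDiffOn (m := i) (by exact_mod_cast hik) hs hy
  rw [iteratedDerivWithin_eq_iteratedFDerivWithin, iteratedDeriv_eq_iteratedFDeriv, ← this]
  rfl

variable {E : Type*} [NormedAddCommGroup E] [NormedSpace ℝ E]
variable {V : Type*} [NormedAddCommGroup V] [NormedSpace ℝ V]

lemma iD_line_bound {k : ℕ} {f : E → V} (hf : ContDiff ℝ (k : ℕ∞) f) {i : ℕ} (hik : i ≤ k)
    (x : E) (v : E) (t : ℝ) :
    ‖iteratedDeriv i (fun s => f (x + s • v)) t‖ ≤ ‖iteratedFDeriv ℝ i f (x + t • v)‖ * ‖v‖ ^ i := by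
  set L : ℝ →L[ℝ] E := ContinuousLinearMap.smulRight (1 : ℝ →L[ℝ] ℝ) v with hL
  have hLapp : ∀ s : ℝ, L s = s • v := by intro s; simp [hL]
  have hLnorm : ‖L‖ ≤ ‖v‖ := by
    rw [hL, ContinuousLinearMap.norm_smulRight_apply]
    simp
  have hfs : ContDiff ℝ (k : ℕ∞) (fun y => f (x + y)) :=
    hf.comp (contDiff_const.add contDiff_id)
  have hcomp : (fun s : ℝ => f (x + s • v)) = (fun y => f (x + y)) ∘ L := by
    funext s; simp [hLapp]
  have hfd : iteratedFDeriv ℝ i (fun s : ℝ => f (x + s • v)) t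
      = (iteratedFDeriv ℝ i (fun y => f (x + y)) (L t)).compContinuousLinearMap (fun _ => L) := by
    rw [hcomp]
    exact L.iteratedFDeriv_comp_right hfs t (by exact_mod_cast hik)
  have h1 : iteratedDeriv i (fun s : ℝ => f (x + s • v)) t
      = iteratedFDeriv ℝ i (fun s : ℝ => f (x + s • v)) t (fun _ => (1:ℝ)) :=
    iteratedDeriv_eq_iteratedFDeriv
  rw [h1, hfd]
  calc ‖(iteratedFDeriv ℝ i (fun y => f (x + y)) (L t)).compContinuousLinearMap
        (fun _ => L) (fun _ => (1:ℝ))‖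
      ≤ ‖(iteratedFDeriv ℝ i (fun y => f (x + y)) (L t)).compContinuousLinearMap (fun _ => L)‖
        * ∏ _m : Fin i, ‖(1:ℝ)‖ := ContinuousMultilinearMap.le_opNorm _ _
    _ = ‖(iteratedFDeriv ℝ i (fun y => f (x + y)) (L t)).compContinuousLinearMap (fun _ => L)‖ := by
        simp
    _ ≤ ‖iteratedFDeriv ℝ i (fun y => f (x + y)) (L t)‖ * ∏ _m : Fin i, ‖L‖ :=
        ContinuousMultilinearMap.norm_compContinuousLinearMap_le _ _
    _ ≤ ‖iteratedFDeriv ℝ i f (x + t • v)‖ * ‖v‖ ^ i := by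
        rw [iFD_shift hf hik x (L t), hLapp]
        refine mul_le_mul_of_nonneg_left ?_ (norm_nonneg _)
        rw [Finset.prod_const, Finset.card_univ, Fintype.card_fin]
        exact pow_le_pow_left₀ (norm_nonneg _) hLnorm i

end helpers

lemma lemB (k : ℕ) (hk : 2 ≤ k) :
    ∃ C : ℝ, 0 < C ∧ ∀ (E V : Type) (_ : NormedAddCommGroup E) (_ : NormedSpace ℝ E)
      (_ : NormedAddCommGroup V) (_ : NormedSpace ℝ V) (f : E → V) (M₀ Mk h : ℝ),
      0 < h → ContDiff ℝ (k : ℕ∞) f → (∀ x, ‖f x‖ ≤ M₀) →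
      (∀ x, ‖iteratedFDeriv ℝ k f x‖ ≤ Mk) →
      ∀ x, ‖fderiv ℝ f x‖ ≤ C * (M₀ / h + h ^ (k - 1) * Mk) := by
  have hk1 : 1 ≤ k := le_trans one_le_two hk
  have h1k : 1 < k := hk
  -- the Vandermonde matrix on nodes 0, 1, ..., k-1
  set W : Matrix (Fin k) (Fin k) ℝ := Matrix.vandermonde (fun m : Fin k => (m : ℝ)) with hW
  have hdet : W.det ≠ 0 := by
    rw [hW, Matrix.det_vandermonde]
    refine Finset.prod_ne_zero_iff.2 fun i _ => Finset.prod_ne_zero_iff.2 fun j hj => ?_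
    have hij : i < j := Finset.mem_Ioi.1 hj
    have : (i : ℝ) < (j : ℝ) := by exact_mod_cast hij
    linarith
  have hinv : W⁻¹ * W = 1 := Matrix.nonsing_inv_mul W (isUnit_iff_ne_zero.2 hdet)
  set idx : Fin k := ⟨1, h1k⟩ with hidx
  set D : ℝ := ∑ m : Fin k, |W⁻¹ idx m| with hD
  have hD0 : 0 ≤ D := Finset.sum_nonneg fun m _ => abs_nonneg _
  set C : ℝ := (D + 1) * ((k : ℝ) ^ k + 1) with hC
  have hkpow : (0:ℝ) < (k:ℝ) ^ k + 1 := by positivity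
  refine ⟨C, by positivity, ?_⟩
  intro E V _ _ _ _ f M₀ Mk h hh hf hM₀ hMk x
  have hM₀0 : 0 ≤ M₀ := le_trans (norm_nonneg _) (hM₀ x)
  have hMk0 : 0 ≤ Mk := le_trans (norm_nonneg _) (hMk x)
  set R : ℝ := M₀ / h + h ^ (k - 1) * Mk with hR
  have hR0 : 0 ≤ R := by positivity
  have hCR : 0 ≤ C * R := by positivity
  refine ContinuousLinearMap.opNorm_le_of_unit_norm hCR ?_
  intro v hv
  -- the restriction of f to the line through x in direction v
  set g : ℝ → V := fun s => f (x + s • v) with hg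
  have hgC : ContDiff ℝ (k : ℕ∞) g :=
    hf.comp (contDiff_const.add (contDiff_id.smul contDiff_const))
  -- derivative of g at 0 is the directional derivative
  have hderiv : deriv g 0 = fderiv ℝ f x v := by
    have hI : HasDerivAt (fun s : ℝ => x + s • v) v 0 := by
      have h1 : HasDerivAt (fun s : ℝ => s • v) ((1:ℝ) • v) 0 :=
        (hasDerivAt_id (0:ℝ)).smul_const v
      simpa [one_smul] using h1.const_add x
    have hdiff : Differentiable ℝ f := hf.differentiable (by simp; omega)
    have hF : HasFDerivAt f (fderiv ℝ f x) ((fun s : ℝ => x + s • v) 0) := by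
      simpa using (hdiff x).hasFDerivAt
    exact (hF.comp_hasDerivAt 0 hI).deriv
  -- bounds on derivatives of g
  have hgbound : ∀ s : ℝ, ‖g s‖ ≤ M₀ := fun s => hM₀ _
  have hgk : ∀ t : ℝ, ‖iteratedDeriv k g t‖ ≤ Mk := by
    intro t
    have := iD_line_bound hf (le_refl k) x v t
    rw [hv, one_pow, mul_one] at this
    exact this.trans (hMk _)
  -- Taylor expansion set-up
  set b : ℝ := (k : ℝ) * h with hb
  have hb0 : 0 < b := by positivity
  have hubd : UniqueDiffOn ℝ (Icc (0:ℝ) b) := uniqueDiffOn_Icc hb0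
  have h0mem : (0:ℝ) ∈ Icc (0:ℝ) b := ⟨le_refl _, hb0.le⟩
  have hk_eq : (k - 1) + 1 = k := Nat.sub_add_cancel hk1
  have hcast : ((k - 1 : ℕ) : WithTop ℕ∞) + 1 = ((k : ℕ∞) : WithTop ℕ∞) := by
    calc ((k - 1 : ℕ) : WithTop ℕ∞) + 1 = (((k-1) + 1 : ℕ) : WithTop ℕ∞) := by push_cast; rfl
      _ = ((k : ℕ∞) : WithTop ℕ∞) := by rw [hk_eq]; rfl
  have hgOn : ContDiffOn ℝ (((k-1 : ℕ) : WithTop ℕ∞) + 1) g (Icc (0:ℝ) b) :=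
    (hgC.of_le (le_of_eq hcast)).contDiffOn
  have hCb : ∀ y ∈ Icc (0:ℝ) b,
      ‖iteratedDerivWithin ((k-1) + 1) g (Icc (0:ℝ) b) y‖ ≤ Mk := by
    intro y hy
    rw [Nat.sub_add_cancel hk1, iDW_eq hgC (le_refl k) hubd hy]
    exact hgk y
  -- Taylor remainder bound at the nodes
  have hrem : ∀ m : Fin k, ‖g ((m:ℝ) * h) - taylorWithinEval g (k-1) (Icc (0:ℝ) b) 0 ((m:ℝ)*h)‖
      ≤ Mk * b ^ k / (Nat.factorial (k-1) : ℝ) := by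
    intro m
    have hmem : (m:ℝ) * h ∈ Icc (0:ℝ) b := by
      constructor
      · positivity
      · rw [hb]
        have hm : (m:ℝ) ≤ (k:ℝ) := by
          have := m.2
          exact_mod_cast le_of_lt this
        exact mul_le_mul_of_nonneg_right hm hh.le
    have := taylor_mean_remainder_bound (n := k-1) hb0.le hgOn hmem hCb
    refine this.trans ?_
    rw [sub_zero, Nat.sub_add_cancel hk1]
    have hfp : (0:ℝ) < (Nat.factorial (k-1) : ℝ) := by positivity
    have hnum : Mk * ((m:ℝ)*h) ^ k ≤ Mk * b ^ k :=
      mul_le_mul_of_nonneg_left (pow_le_pow_left₀ hmem.1 hmem.2 k) hMk0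
    exact div_le_div_of_nonneg_right hnum hfp.le
  -- the Taylor polynomial values at the nodes
  set a : ℕ → V := fun i => (((Nat.factorial i : ℝ))⁻¹ * h ^ i) • iteratedDeriv i g 0 with ha
  set P : Fin k → V := fun m => taylorWithinEval g (k-1) (Icc (0:ℝ) b) 0 ((m:ℝ)*h) with hP
  have hPval : ∀ m : Fin k, P m = ∑ i : Fin k, ((m:ℝ) ^ (i:ℕ)) • a (i:ℕ) := by
    intro m
    simp only [hP]
    rw [taylor_within_apply]
    rw [Nat.sub_add_cancel hk1]
    rw [← Fin.sum_univ_eq_sum_range (fun i => (((Nat.factorial i : ℝ))⁻¹ * ((m:ℝ)*h - 0) ^ i) •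
      iteratedDerivWithin i g (Icc (0:ℝ) b) 0) k]
    refine Finset.sum_congr rfl fun i _ => ?_
    rw [iDW_eq hgC (le_of_lt i.2) hubd h0mem, ha, sub_zero, mul_pow, smul_smul]
    ring_nf
  -- bound on the Taylor polynomial values
  have hPbound : ∀ m : Fin k, ‖P m‖ ≤ M₀ + Mk * b ^ k / (Nat.factorial (k-1) : ℝ) := by
    intro m
    have : P m = g ((m:ℝ)*h) - (g ((m:ℝ)*h) - P m) := by abel
    rw [this]
    refine (norm_sub_le _ _).trans ?_
    exact add_le_add (hgbound _) (hrem m)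
  -- Vandermonde inversion: recover a 1
  have hextract : a 1 = ∑ m : Fin k, (W⁻¹ idx m) • P m := by
    have : ∑ m : Fin k, (W⁻¹ idx m) • P m
        = ∑ i : Fin k, ((W⁻¹ * W) idx i) • a (i:ℕ) := by
      simp_rw [hPval, Finset.smul_sum, smul_smul]
      rw [Finset.sum_comm]
      refine Finset.sum_congr rfl fun i _ => ?_
      rw [Matrix.mul_apply, Finset.sum_smul]
      refine Finset.sum_congr rfl fun m _ => ?_
      rw [hW, Matrix.vandermonde_apply]
    rw [this, hinv]
    have : ∀ i : Fin k, ((1 : Matrix (Fin k) (Fin k) ℝ) idx i) • a (i:ℕ)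
        = if idx = i then a (i:ℕ) else 0 := by
      intro i
      rw [Matrix.one_apply]
      split <;> simp
    simp_rw [this]
    rw [Finset.sum_ite_eq]
    simp [hidx]
  -- conclude
  have hnorm : h * ‖deriv g 0‖ ≤ D * (M₀ + Mk * b ^ k / (Nat.factorial (k-1) : ℝ)) := by
    have h1 : a 1 = h • deriv g 0 := by
      rw [ha]
      simp [iteratedDeriv_one]
    have h2 : ‖a 1‖ = h * ‖deriv g 0‖ := by
      rw [h1, norm_smul, Real.norm_eq_abs, abs_of_pos hh]
    rw [← h2, hextract]
    refine (norm_sum_le _ _).trans ?_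
    rw [hD, Finset.sum_mul]
    refine Finset.sum_le_sum fun m _ => ?_
    rw [norm_smul, Real.norm_eq_abs]
    exact mul_le_mul_of_nonneg_left (hPbound m) (abs_nonneg _)
  have hBle : M₀ + Mk * b ^ k / (Nat.factorial (k-1) : ℝ) ≤ ((k:ℝ)^k + 1) * h * R := by
    have hfac : (1:ℝ) ≤ (Nat.factorial (k-1) : ℝ) := by
      exact_mod_cast Nat.one_le_iff_ne_zero.2 (Nat.factorial_ne_zero _)
    have h3 : Mk * b ^ k / (Nat.factorial (k-1) : ℝ) ≤ Mk * b ^ k :=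
      div_le_self (mul_nonneg hMk0 (pow_nonneg hb0.le k)) hfac
    have hbk : b ^ k = (k:ℝ)^k * h^k := by rw [hb, mul_pow]
    have hhk : h ^ k = h ^ (k-1) * h := by
      rw [← pow_succ, Nat.sub_add_cancel hk1]
    rw [hR]
    have hM0h : M₀ ≤ h * (M₀ / h) := by
      rw [mul_div_cancel₀]
      exact ne_of_gt hh
    have expand : ((k:ℝ)^k + 1) * h * (M₀ / h + h ^ (k - 1) * Mk)
        = ((k:ℝ)^k + 1) * (h * (M₀/h)) + ((k:ℝ)^k + 1) * (h^(k-1) * h * Mk) := by ring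
    rw [expand]
    have hkk : (0:ℝ) ≤ (k:ℝ)^k := pow_nonneg (Nat.cast_nonneg k) k
    have t1 : M₀ ≤ ((k:ℝ)^k + 1) * (h * (M₀/h)) := by
      refine hM0h.trans ?_
      exact le_mul_of_one_le_left (mul_nonneg hh.le (div_nonneg hM₀0 hh.le)) (by linarith)
    have t2 : Mk * b ^ k / (Nat.factorial (k-1) : ℝ) ≤ ((k:ℝ)^k + 1) * (h^(k-1) * h * Mk) := by
      refine h3.trans ?_
      rw [hbk, hhk]
      have hq : (0:ℝ) ≤ h^(k-1)*h*Mk :=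
        mul_nonneg (mul_nonneg (pow_nonneg hh.le (k-1)) hh.le) hMk0
      calc Mk * ((k:ℝ)^k * (h^(k-1)*h)) = (k:ℝ)^k * (h^(k-1)*h*Mk) := by ring
        _ ≤ ((k:ℝ)^k + 1) * (h^(k-1)*h*Mk) := by
            refine mul_le_mul_of_nonneg_right ?_ hq
            linarith
        _ = ((k:ℝ)^k + 1) * (h^(k-1)*h*Mk) := rfl
    linarith
  -- final computation
  rw [hderiv] at hnorm
  have final : h * ‖fderiv ℝ f x v‖ ≤ h * (C * R) := by
    calc h * ‖fderiv ℝ f x v‖ ≤ D * (M₀ + Mk * b ^ k / (Nat.factorial (k-1) : ℝ)) := hnorm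
      _ ≤ D * (((k:ℝ)^k + 1) * h * R) := by
          exact mul_le_mul_of_nonneg_left hBle hD0
      _ = (D * ((k:ℝ)^k + 1)) * (h * R) := by ring
      _ ≤ ((D+1) * ((k:ℝ)^k + 1)) * (h * R) := by
          refine mul_le_mul_of_nonneg_right ?_ (mul_nonneg hh.le hR0)
          exact mul_le_mul_of_nonneg_right (by linarith) hkpow.le
      _ = h * (C * R) := by rw [hC]; ring
  exact le_of_mul_le_mul_left (by linarith [final]) hh


lemma keyP (j : ℕ) : ∀ (k : ℕ), j ≤ k →
    ∃ C : ℝ, 0 < C ∧ ∀ (E V : Type) (_ : NormedAddCommGroup E) (_ : NormedSpace ℝ E)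
      (_ : NormedAddCommGroup V) (_ : NormedSpace ℝ V) (f : E → V) (M₀ Mk h : ℝ),
      0 < h → ContDiff ℝ (k : ℕ∞) f → (∀ x, ‖f x‖ ≤ M₀) →
      (∀ x, ‖iteratedFDeriv ℝ k f x‖ ≤ Mk) →
      ∀ x, ‖iteratedFDeriv ℝ j f x‖ ≤ C * (M₀ / h ^ j + h ^ (k - j) * Mk) := by
  induction j with
  | zero =>
      intro k _
      refine ⟨1, one_pos, ?_⟩
      intro E V _ _ _ _ f M₀ Mk h hh hf hM₀ hMk x
      have hMk0 : 0 ≤ Mk := (norm_nonneg _).trans (hMk x)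
      have : ‖iteratedFDeriv ℝ 0 f x‖ = ‖f x‖ := norm_iteratedFDeriv_zero
      rw [this]
      have := hM₀ x
      have hpos : 0 ≤ h ^ (k - 0) * Mk := mul_nonneg (pow_nonneg hh.le _) hMk0
      simp only [pow_zero, Nat.sub_zero] at *
      calc ‖f x‖ ≤ M₀ := hM₀ x
        _ ≤ 1 * (M₀ / 1 + h ^ k * Mk) := by
            rw [one_mul, div_one]
            linarith
  | succ j IH =>
      intro k hjk
      by_cases hkj : j + 1 = k
      · subst hkj
        refine ⟨1, one_pos, ?_⟩
        intro E V _ _ _ _ f M₀ Mk h hh hf hM₀ hMk x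
        have hM₀0 : 0 ≤ M₀ := (norm_nonneg _).trans (hM₀ x)
        calc ‖iteratedFDeriv ℝ (j+1) f x‖ ≤ Mk := hMk x
          _ ≤ 1 * (M₀ / h ^ (j+1) + h ^ ((j+1) - (j+1)) * Mk) := by
              rw [one_mul, Nat.sub_self, pow_zero, one_mul]
              have : 0 ≤ M₀ / h ^ (j+1) := div_nonneg hM₀0 (pow_nonneg hh.le _)
              linarith
      · have hjk1 : j + 1 < k := lt_of_le_of_ne hjk hkj
        have hk2 : 2 ≤ k := by omega
        obtain ⟨C₁, hC₁, HB⟩ := lemB k hk2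
        obtain ⟨C₂, hC₂, HI⟩ := IH (k-1) (by omega)
        refine ⟨C₂ * (C₁ + 1), by positivity, ?_⟩
        intro E V _ _ _ _ f M₀ Mk h hh hf hM₀ hMk x
        have hM₀0 : 0 ≤ M₀ := (norm_nonneg _).trans (hM₀ x)
        have hMk0 : 0 ≤ Mk := (norm_nonneg _).trans (hMk x)
        have hk1 : 1 ≤ k := by omega
        have hk_eq : (k - 1) + 1 = k := Nat.sub_add_cancel hk1
        have hcast : ((k - 1 : ℕ) : WithTop ℕ∞) + 1 = ((k : ℕ∞) : WithTop ℕ∞) := by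
          calc ((k - 1 : ℕ) : WithTop ℕ∞) + 1 = (((k-1) + 1 : ℕ) : WithTop ℕ∞) := by
                push_cast; rfl
            _ = ((k : ℕ∞) : WithTop ℕ∞) := by rw [hk_eq]; rfl
        set g : E → (E →L[ℝ] V) := fderiv ℝ f with hgdef
        have hg : ContDiff ℝ ((k - 1 : ℕ) : ℕ∞) g := hf.fderiv_right (le_of_eq hcast)
        have hgtop : ∀ y, ‖iteratedFDeriv ℝ (k-1) g y‖ ≤ Mk := by
          intro y
          rw [hgdef, norm_iteratedFDeriv_fderiv, hk_eq]
          exact hMk y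
        have hgsup : ∀ y, ‖g y‖ ≤ C₁ * (M₀ / h + h ^ (k-1) * Mk) :=
          HB E V _ _ _ _ f M₀ Mk h hh hf hM₀ hMk
        have main := HI E (E →L[ℝ] V) _ _ _ _ g (C₁ * (M₀ / h + h ^ (k-1) * Mk)) Mk h hh
          hg hgsup hgtop x
        have heq : ‖iteratedFDeriv ℝ (j+1) f x‖ = ‖iteratedFDeriv ℝ j g x‖ :=
          norm_iteratedFDeriv_fderiv.symm
        rw [heq]
        refine main.trans ?_
        have hXp : 0 ≤ M₀ / h ^ (j+1) := div_nonneg hM₀0 (pow_nonneg hh.le _)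
        have hYp : 0 ≤ h ^ ((k-1) - j) * Mk := mul_nonneg (pow_nonneg hh.le _) hMk0
        have e1 : (M₀ / h + h ^ (k-1) * Mk) / h ^ j
            = M₀ / h ^ (j+1) + h ^ ((k-1) - j) * Mk := by
          rw [add_div]
          congr 1
          · rw [div_div, ← pow_succ']
          · rw [pow_sub₀ h (ne_of_gt hh) (by omega : j ≤ k - 1)]
            field_simp
        calc C₂ * (C₁ * (M₀ / h + h ^ (k-1) * Mk) / h ^ j + h ^ ((k-1) - j) * Mk)
            = C₂ * (C₁ * (M₀ / h ^ (j+1) + h ^ ((k-1) - j) * Mk) + h ^ ((k-1) - j) * Mk) := by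
              rw [mul_div_assoc, e1]
          _ ≤ C₂ * ((C₁ + 1) * (M₀ / h ^ (j+1) + h ^ ((k-1) - j) * Mk)) := by
              refine mul_le_mul_of_nonneg_left ?_ hC₂.le
              nlinarith [hXp, hYp]
          _ = C₂ * (C₁ + 1) * (M₀ / h ^ (j+1) + h ^ (k - (j+1)) * Mk) := by
              rw [show (k-1) - j = k - (j+1) by omega]
              ring


/-- Landau–Kolmogorov interpolation inequality: for `0 < j < k` there is a
constant `C` depending only on `j, k, n` such that for every `C^k` function
`f : ℝⁿ → V` into a normed space with `‖f‖ ≤ M₀` and `‖D^k f‖ ≤ M_k` everywhere,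
one has `sup ‖D^j f‖ ≤ C M_k^{j/k} M₀^{1-j/k}`. -/

theorem stmt17 (n j k : ℕ) (hj : 0 < j) (hjk : j < k) :
    ∃ C : ℝ, 0 < C ∧
      ∀ (V : Type) (_ : NormedAddCommGroup V) (_ : NormedSpace ℝ V)
        (f : (Fin n → ℝ) → V) (M₀ Mk : ℝ),
        0 ≤ M₀ → 0 ≤ Mk → ContDiff ℝ (k : ℕ∞) f →
        (∀ x, ‖f x‖ ≤ M₀) →
        (∀ x, ‖iteratedFDeriv ℝ k f x‖ ≤ Mk) →
        ∀ x, ‖iteratedFDeriv ℝ j f x‖ ≤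
          C * Mk ^ ((j : ℝ) / (k : ℝ)) * M₀ ^ (1 - (j : ℝ) / (k : ℝ)) := by
  obtain ⟨C, hC, H⟩ := keyP j k hjk.le
  refine ⟨2 * C + 1, by positivity, ?_⟩
  intro V _ _ f M₀ Mk hM₀0 hMk0 hf hM₀ hMk x
  have hk0 : 0 < k := lt_trans hj hjk
  have hkR : (0:ℝ) < (k:ℝ) := by exact_mod_cast hk0
  have hjkR : (j:ℝ) / (k:ℝ) < 1 := by
    rw [div_lt_one hkR]; exact_mod_cast hjk
  have hjkR0 : 0 < (j:ℝ) / (k:ℝ) := by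
    apply div_pos _ hkR; exact_mod_cast hj
  rcases eq_or_lt_of_le hM₀0 with hM0 | hM0
  · -- M₀ = 0 : f is identically zero
    have hf0 : f = fun _ => (0:V) := by
      funext y
      have := hM₀ y
      rw [← hM0] at this
      exact norm_le_zero_iff.1 this
    rw [hf0, iteratedFDeriv_zero_fun]
    simp only [Pi.zero_apply, norm_zero]
    exact mul_nonneg (mul_nonneg (by positivity) (Real.rpow_nonneg hMk0 _))
      (Real.rpow_nonneg hM₀0 _)
  rcases eq_or_lt_of_le hMk0 with hMk0' | hMkpos
  · -- Mk = 0 : the derivative vanishes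
    have key : ∀ h : ℝ, 0 < h → ‖iteratedFDeriv ℝ j f x‖ ≤ C * M₀ / h ^ j := by
      intro h hh
      have := H (Fin n → ℝ) V _ _ _ _ f M₀ Mk h hh hf hM₀ hMk x
      rw [← hMk0'] at this
      calc ‖iteratedFDeriv ℝ j f x‖ ≤ C * (M₀ / h ^ j + h ^ (k - j) * 0) := this
        _ = C * M₀ / h ^ j := by ring
    have hlim : Tendsto (fun h : ℝ => C * M₀ / h ^ j) atTop (nhds 0) := by
      have h1 : Tendsto (fun h : ℝ => h ^ j) atTop atTop :=
        tendsto_pow_atTop hj.ne'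
      have := h1.inv_tendsto_atTop.const_mul (C * M₀)
      simpa [div_eq_mul_inv, mul_zero] using this
    have hle : ‖iteratedFDeriv ℝ j f x‖ ≤ 0 := by
      refine ge_of_tendsto hlim ?_
      filter_upwards [eventually_gt_atTop 0] with h hh
      exact key h hh
    have hrhs : (2 * C + 1) * Mk ^ ((j : ℝ) / (k : ℝ)) * M₀ ^ (1 - (j : ℝ) / (k : ℝ)) = 0 := by
      rw [← hMk0', Real.zero_rpow (ne_of_gt hjkR0)]
      ring
    rw [hrhs]
    exact hle
  · -- both M₀, Mk > 0 : optimize h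
    set θ : ℝ := (j : ℝ) / (k : ℝ) with hθ
    set h : ℝ := (M₀ / Mk) ^ (1 / (k:ℝ)) with hh'
    have hbase : 0 < M₀ / Mk := div_pos hM0 hMkpos
    have hh : 0 < h := Real.rpow_pos_of_pos hbase _
    have hpowj : h ^ j = M₀ ^ θ / Mk ^ θ := by
      rw [hh', ← Real.rpow_natCast ((M₀/Mk) ^ (1/(k:ℝ))) j, ← Real.rpow_mul hbase.le,
        one_div, inv_mul_eq_div, ← hθ, Real.div_rpow hM0.le hMkpos.le]
    have hpowkj : h ^ (k - j) = M₀ ^ (1 - θ) / Mk ^ (1 - θ) := by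
      rw [hh', ← Real.rpow_natCast ((M₀/Mk) ^ (1/(k:ℝ))) (k - j), ← Real.rpow_mul hbase.le]
      have hcast : ((k - j : ℕ) : ℝ) = (k:ℝ) - (j:ℝ) := by
        rw [Nat.cast_sub hjk.le]
      rw [hcast]
      have : 1 / (k:ℝ) * ((k:ℝ) - (j:ℝ)) = 1 - θ := by
        rw [hθ, mul_sub, one_div, inv_mul_cancel₀ hkR.ne', inv_mul_eq_div]
      rw [this, Real.div_rpow hM0.le hMkpos.le]
    have e1 : M₀ / h ^ j = M₀ ^ (1 - θ) * Mk ^ θ := by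
      rw [hpowj, div_div_eq_mul_div, mul_div_right_comm]
      congr 1
      rw [Real.rpow_sub hM0, Real.rpow_one]
    have e2 : h ^ (k - j) * Mk = M₀ ^ (1 - θ) * Mk ^ θ := by
      rw [hpowkj, div_mul_eq_mul_div, mul_div_assoc]
      congr 1
      symm
      rw [eq_div_iff (ne_of_gt (Real.rpow_pos_of_pos hMkpos _)), ← Real.rpow_add hMkpos,
        show θ + (1 - θ) = 1 by ring, Real.rpow_one]
    have := H (Fin n → ℝ) V _ _ _ _ f M₀ Mk h hh hf hM₀ hMk x
    rw [e1, e2] at this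
    refine this.trans ?_
    have hprod : 0 ≤ M₀ ^ (1 - θ) * Mk ^ θ :=
      mul_nonneg (Real.rpow_nonneg hM₀0 _) (Real.rpow_nonneg hMk0 _)
    calc C * (M₀ ^ (1 - θ) * Mk ^ θ + M₀ ^ (1 - θ) * Mk ^ θ)
        = (2 * C) * (Mk ^ θ * M₀ ^ (1 - θ)) := by ring
      _ ≤ (2 * C + 1) * (Mk ^ θ * M₀ ^ (1 - θ)) := by
          exact mul_le_mul_of_nonneg_right (by linarith) (by rw [mul_comm]; exact hprod)
      _ = (2 * C + 1) * Mk ^ θ * M₀ ^ (1 - θ) := by ring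
end
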